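/- For the pseudohyperbolic metric ρ(z,w) = |(z−w)/(1−z̄w)| on the open unit disk, if ρ(z,z') ≤ λ and ρ(w,w') ≤ λ with 0 < λ < 1, and α = 2λ/(1+λ²), then ρ(z',w') ≥ (ρ(z,w) − α)/(1 − α ρ(z,w)). -/

import Mathlib

open Complex

lemma denne (z w : ℂ) (hz : ‖z‖ < 1) (hw : ‖w‖ < 1) :
    (1 : ℂ) - (starRingEnd ℂ) z * w ≠ 0 := by
  intro h
  have h1 : (starRingEnd ℂ) z * w = 1 := by linear_combination -h
  have h2 : ‖(starRingEnd ℂ) z * w‖ < 1 := by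
    rw [norm_mul, Complex.norm_conj]
    nlinarith [norm_nonneg z, norm_nonneg w]
  rw [h1] at h2; simp at h2

lemma memd (u z : ℂ) (hu : ‖u‖ < 1) (hz : ‖z‖ < 1) :
    ‖(u - z) / (1 - (starRingEnd ℂ) u * z)‖ < 1 := by
  rw [norm_div, div_lt_one (norm_pos_iff.mpr (denne u z hu hz))]
  rw [Complex.norm_def, Complex.norm_def]
  apply Real.sqrt_lt_sqrt (Complex.normSq_nonneg _)
  have hu2 : Complex.normSq u < 1 := by rw [← Complex.sq_norm]; nlinarith [norm_nonneg u]
  have hz2 : Complex.normSq z < 1 := by rw [← Complex.sq_norm]; nlinarith [norm_nonneg z]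
  simp only [Complex.normSq_apply, Complex.sub_re, Complex.sub_im, Complex.mul_re,
    Complex.mul_im, Complex.one_re, Complex.one_im, Complex.conj_re, Complex.conj_im] at *
  nlinarith [mul_pos (sub_pos.2 hu2) (sub_pos.2 hz2)]

lemma base (a b : ℂ) (ha : ‖a‖ < 1) (hb : ‖b‖ < 1) :
    ‖(a - b) / (1 - (starRingEnd ℂ) a * b)‖ ≤
      (‖a‖ + ‖b‖) / (1 + ‖a‖ * ‖b‖) := by
  have hr := norm_nonneg a
  have hs := norm_nonneg b
  rw [norm_div, div_le_div_iff₀ (norm_pos_iff.mpr (denne a b ha hb)) (by positivity)]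
  set r := ‖a‖
  set s := ‖b‖
  set x := (a * (starRingEnd ℂ) b).re with hx
  have hxle : |x| ≤ r * s := by
    calc |x| ≤ ‖a * (starRingEnd ℂ) b‖ := Complex.abs_re_le_norm _
    _ = r * s := by rw [norm_mul, Complex.norm_conj]
  have e1 : ‖a - b‖ ^ 2 = r ^ 2 + s ^ 2 - 2 * x := by
    rw [Complex.sq_norm, Complex.normSq_sub, ← Complex.sq_norm, ← Complex.sq_norm]
  have e2 : ‖1 - (starRingEnd ℂ) a * b‖ ^ 2 = 1 + r ^ 2 * s ^ 2 - 2 * x := by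
    rw [Complex.sq_norm, Complex.normSq_sub, Complex.normSq_one, Complex.normSq_mul,
      Complex.normSq_conj, ← Complex.sq_norm, ← Complex.sq_norm, one_mul]
    simp only [one_mul, map_mul, Complex.conj_conj]
    rfl
  have hxlo : -(r * s) ≤ x := (abs_le.1 hxle).1
  have key : ‖a - b‖ ^ 2 * (1 + r * s) ^ 2 ≤
      (r + s) ^ 2 * ‖1 - (starRingEnd ℂ) a * b‖ ^ 2 := by
    rw [e1, e2]
    nlinarith [mul_nonneg (mul_nonneg (by nlinarith : (0:ℝ) ≤ 1 - r ^ 2)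
      (by nlinarith : (0:ℝ) ≤ 1 - s ^ 2)) (by linarith : (0:ℝ) ≤ x + r * s)]
  nlinarith [key, norm_nonneg (a - b), norm_nonneg (1 - (starRingEnd ℂ) a * b),
    mul_nonneg (norm_nonneg (a - b)) (by positivity : (0:ℝ) ≤ 1 + r * s),
    mul_nonneg (by positivity : (0:ℝ) ≤ r + s) (norm_nonneg (1 - (starRingEnd ℂ) a * b))]

lemma sym (z w : ℂ) :
    ‖(z - w) / (1 - (starRingEnd ℂ) z * w)‖ =
      ‖(w - z) / (1 - (starRingEnd ℂ) w * z)‖ := by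
  have hd : (1 : ℂ) - (starRingEnd ℂ) w * z = (starRingEnd ℂ) (1 - (starRingEnd ℂ) z * w) := by
    simp [map_sub, map_mul, mul_comm]
  rw [norm_div, norm_div, norm_sub_rev, hd, Complex.norm_conj]

lemma tri (u z w : ℂ) (hu : ‖u‖ < 1) (hz : ‖z‖ < 1)
    (hw : ‖w‖ < 1) :
    ‖(z - w) / (1 - (starRingEnd ℂ) z * w)‖ ≤
      (‖(u - z) / (1 - (starRingEnd ℂ) u * z)‖ +
        ‖(u - w) / (1 - (starRingEnd ℂ) u * w)‖) /
      (1 + ‖(u - z) / (1 - (starRingEnd ℂ) u * z)‖ *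
        ‖(u - w) / (1 - (starRingEnd ℂ) u * w)‖) := by
  set a : ℂ := (u - z) / (1 - (starRingEnd ℂ) u * z) with ha_def
  set b : ℂ := (u - w) / (1 - (starRingEnd ℂ) u * w) with hb_def
  have ha : ‖a‖ < 1 := memd u z hu hz
  have hb : ‖b‖ < 1 := memd u w hu hw
  have d1 : (1 : ℂ) - (starRingEnd ℂ) u * z ≠ 0 := denne u z hu hz
  have d2 : (1 : ℂ) - (starRingEnd ℂ) u * w ≠ 0 := denne u w hu hw
  have d3 : (1 : ℂ) - (starRingEnd ℂ) z * w ≠ 0 := denne z w hz hw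
  have dK : (1 : ℂ) - (starRingEnd ℂ) u * u ≠ 0 := denne u u hu hu
  have hconj5 : (1 : ℂ) - u * (starRingEnd ℂ) z = (starRingEnd ℂ) (1 - (starRingEnd ℂ) u * z) := by
    simp [map_sub, map_mul]
  have d5 : (1 : ℂ) - u * (starRingEnd ℂ) z ≠ 0 := by
    rw [hconj5]
    exact (map_ne_zero (starRingEnd ℂ)).2 d1
  have ca : (starRingEnd ℂ) a = ((starRingEnd ℂ) u - (starRingEnd ℂ) z) / (1 - u * (starRingEnd ℂ) z) := by
    rw [ha_def, map_div₀, map_sub, map_sub, map_mul, map_one, Complex.conj_conj]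
  have n_eq : a - b = (w - z) * (1 - (starRingEnd ℂ) u * u) /
      ((1 - (starRingEnd ℂ) u * z) * (1 - (starRingEnd ℂ) u * w)) := by
    rw [ha_def, hb_def]
    rw [div_sub_div _ _ d1 d2]
    ring
  have d_eq : 1 - (starRingEnd ℂ) a * b = (1 - (starRingEnd ℂ) u * u) * (1 - (starRingEnd ℂ) z * w) /
      ((1 - u * (starRingEnd ℂ) z) * (1 - (starRingEnd ℂ) u * w)) := by
    rw [ca, hb_def]
    rw [div_mul_div_comm, one_sub_div (mul_ne_zero d5 d2)]
    ring
  have habs5 : ‖1 - u * (starRingEnd ℂ) z‖ = ‖1 - (starRingEnd ℂ) u * z‖ := by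
    rw [hconj5, Complex.norm_conj]
  have inv : ‖(z - w) / (1 - (starRingEnd ℂ) z * w)‖ =
      ‖(a - b) / (1 - (starRingEnd ℂ) a * b)‖ := by
    rw [norm_div, norm_div, n_eq, d_eq, norm_div, norm_div, norm_mul, norm_mul, norm_mul, norm_mul,
      habs5, norm_sub_rev w z]
    have p1 : 0 < ‖1 - (starRingEnd ℂ) u * z‖ := norm_pos_iff.mpr d1
    have p2 : 0 < ‖1 - (starRingEnd ℂ) u * w‖ := norm_pos_iff.mpr d2
    have p3 : 0 < ‖1 - (starRingEnd ℂ) z * w‖ := norm_pos_iff.mpr d3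
    have pK : 0 < ‖1 - (starRingEnd ℂ) u * u‖ := norm_pos_iff.mpr dK
    rw [div_div_div_cancel_right₀ (mul_pos p1 p2).ne', mul_comm ‖1 - (starRingEnd ℂ) u * u‖,
      mul_div_mul_right _ _ pK.ne']
  rw [inv]
  exact base a b ha hb

set_option maxHeartbeats 1000000 in
theorem stmt_9 (ρ : ℂ → ℂ → ℝ)
    (hρ : ∀ z w : ℂ, ρ z w = ‖(z - w) / (1 - (starRingEnd ℂ) z * w)‖)
    (z z' w w' : ℂ)
    (hz : ‖z‖ < 1) (hz' : ‖z'‖ < 1)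
    (hw : ‖w‖ < 1) (hw' : ‖w'‖ < 1)
    (lam : ℝ) (hlam0 : 0 < lam) (hlam1 : lam < 1)
    (alpha : ℝ) (halpha : alpha = 2 * lam / (1 + lam ^ 2))
    (h1 : ρ z z' ≤ lam) (h2 : ρ w w' ≤ lam) :
    (ρ z w - alpha) / (1 - alpha * ρ z w) ≤ ρ z' w' := by
  simp only [hρ] at h1 h2 ⊢
  set r := ‖(z - w) / (1 - (starRingEnd ℂ) z * w)‖ with hr_def
  set s := ‖(z - z') / (1 - (starRingEnd ℂ) z * z')‖ with hs_def
  set t := ‖(w - w') / (1 - (starRingEnd ℂ) w * w')‖ with ht_def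
  set a := ‖(z' - w') / (1 - (starRingEnd ℂ) z' * w')‖ with ha_def
  set x := ‖(z' - w) / (1 - (starRingEnd ℂ) z' * w)‖ with hx_def
  have hr0 : 0 ≤ r := norm_nonneg _
  have hs0 : 0 ≤ s := norm_nonneg _
  have ht0 : 0 ≤ t := norm_nonneg _
  have ha0 : 0 ≤ a := norm_nonneg _
  have hx0 : 0 ≤ x := norm_nonneg _
  have hr1 : r < 1 := memd z w hz hw
  have ha1 : a < 1 := memd z' w' hz' hw'
  have hx1 : x < 1 := memd z' w hz' hw
  -- triangle inequality via z' : r ≤ (s + x)/(1 + s x)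
  have T1 : r ≤ (s + x) / (1 + s * x) := by
    have := tri z' z w hz' hz hw
    rwa [← sym z z', ← hr_def, ← hs_def, ← hx_def] at this
  -- triangle inequality via w' : x ≤ (a + t)/(1 + a t)
  have T2 : x ≤ (a + t) / (1 + a * t) := by
    have := tri w' z' w hw' hz' hw
    rwa [← sym z' w', ← sym w w', ← hx_def, ← ha_def, ← ht_def] at this
  clear_value r s t a x
  have P0 : r * (1 + s * x) ≤ s + x := (le_div_iff₀ (by positivity)).1 T1
  have Q0 : x * (1 + a * t) ≤ a + t := (le_div_iff₀ (by positivity)).1 T2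
  have P1 : r * (1 + lam * x) ≤ lam + x := by
    nlinarith [mul_nonneg (sub_nonneg.2 h1) (by nlinarith : (0:ℝ) ≤ 1 - r * x)]
  have P2 : x * (1 + a * lam) ≤ lam + a := by
    nlinarith [mul_nonneg (sub_nonneg.2 h2) (by nlinarith : (0:ℝ) ≤ 1 - x * a)]
  have hla : (0:ℝ) ≤ 1 + lam * a := by positivity
  have Step3 : r * (1 + lam ^ 2 + 2 * lam * a) ≤ 2 * lam + a * (1 + lam ^ 2) := by
    nlinarith [mul_le_mul_of_nonneg_right P1 hla,
      mul_nonneg (sub_nonneg.2 P2) (by nlinarith : (0:ℝ) ≤ 1 - lam * r)]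
  have h1l : (0:ℝ) < 1 + lam ^ 2 := by positivity
  have e : alpha * (1 + lam ^ 2) = 2 * lam := by rw [halpha]; field_simp
  have halpha1 : alpha < 1 := by
    rw [halpha, div_lt_one h1l]; nlinarith [sq_nonneg (1 - lam)]
  have halpha0 : 0 < alpha := by rw [halpha]; positivity
  have hpos : 0 < 1 - alpha * r := by nlinarith
  rw [div_le_iff₀ hpos]
  have e2 : a * (1 - alpha * r) * (1 + lam ^ 2) = a * (1 + lam ^ 2) - a * r * (2 * lam) := by
    rw [← e]; ring
  have e3 : (r - alpha) * (1 + lam ^ 2) = r * (1 + lam ^ 2) - 2 * lam := by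
    rw [← e]; ring
  have final : (r - alpha) * (1 + lam ^ 2) ≤ a * (1 - alpha * r) * (1 + lam ^ 2) := by
    rw [e2, e3]; nlinarith [Step3]
  exact le_of_mul_le_mul_right final h1l
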